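/- Let A, B, M, M̄ be n×n real matrices with A, B symmetric positive definite, M symmetric positive definite, M̄ diagonal positive definite, and suppose A = B. Assume there is a constant C₁ ∈ (0,1) with C₁(M̄u,u) ≤ (Mu,u) ≤ (M̄u,u) for all u. Let τ > 0 and X = (I + τ² M̄⁻¹ A M⁻¹ A)⁻¹ (M̄⁻¹M − I). Then every eigenvalue λ of X is real and satisfies C₁ − 1 < λ ≤ 0. -/

import Mathlib

open Matrix

lemma quadC {n : ℕ} (R : Matrix (Fin n) (Fin n) ℝ) (hR : R.IsSymm) (v : Fin n → ℂ) :
    star v ⬝ᵥ ((R.map ((↑) : ℝ → ℂ)) *ᵥ v) =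
      (((R *ᵥ (fun i => (v i).re)) ⬝ᵥ (fun i => (v i).re)
        + (R *ᵥ (fun i => (v i).im)) ⬝ᵥ (fun i => (v i).im) : ℝ) : ℂ) := by
  set a : Fin n → ℝ := fun i => (v i).re with ha
  set b : Fin n → ℝ := fun i => (v i).im with hb
  set Φ : (Fin n → ℝ) → (Fin n → ℂ) := fun u i => ((u i : ℝ) : ℂ) with hΦ
  have hmv : ∀ u : Fin n → ℝ, (R.map ((↑) : ℝ → ℂ)) *ᵥ Φ u = Φ (R *ᵥ u) := by
    intro u; funext i
    exact (RingHom.map_mulVec Complex.ofRealHom R u i).symm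
  have hdp : ∀ u w : Fin n → ℝ, Φ u ⬝ᵥ Φ w = ((u ⬝ᵥ w : ℝ) : ℂ) := by
    intro u w; exact (RingHom.map_dotProduct Complex.ofRealHom u w).symm
  have hsymq : a ⬝ᵥ (R *ᵥ b) = b ⬝ᵥ (R *ᵥ a) := by
    rw [dotProduct_mulVec, ← hR.eq, vecMul_transpose, hR.eq, dotProduct_comm]
  have hv : v = Φ a + Complex.I • Φ b := by
    funext i
    simp only [Pi.add_apply, Pi.smul_apply, hΦ, smul_eq_mul, ha, hb]
    rw [mul_comm]
    exact (Complex.re_add_im (v i)).symm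
  have hsv : star v = Φ a - Complex.I • Φ b := by
    funext i
    simp only [Pi.star_apply, Pi.sub_apply, Pi.smul_apply, hΦ, smul_eq_mul, ha, hb]
    rw [mul_comm]
    exact Complex.ext (by simp) (by simp)
  rw [hsv]
  conv_lhs => rw [hv]
  rw [mulVec_add, mulVec_smul, hmv, hmv, sub_dotProduct, dotProduct_add, dotProduct_add,
    dotProduct_smul, dotProduct_smul, smul_dotProduct, smul_dotProduct,
    hdp, hdp, hdp, hdp, hsymq]
  have h1 : ((a ⬝ᵥ (R *ᵥ a) : ℝ) : ℂ) = (((R *ᵥ a) ⬝ᵥ a : ℝ) : ℂ) := by rw [dotProduct_comm]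
  have h2 : ((b ⬝ᵥ (R *ᵥ b) : ℝ) : ℂ) = (((R *ᵥ b) ⬝ᵥ b : ℝ) : ℂ) := by rw [dotProduct_comm]
  rw [dotProduct_comm a (R *ᵥ a), dotProduct_comm b (R *ᵥ b)]
  push_cast
  simp only [smul_eq_mul]
  rw [show Complex.I * (Complex.I * ((R *ᵥ b ⬝ᵥ b : ℝ) : ℂ)) = -((R *ᵥ b ⬝ᵥ b : ℝ) : ℂ) by
    rw [← mul_assoc, Complex.I_mul_I]; ring]
  ring

theorem stmt_4 {n : ℕ} (A B M Mbar : Matrix (Fin n) (Fin n) ℝ)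
    (hA : A.PosDef) (hB : B.PosDef) (hAB : A = B)
    (hM : M.PosDef) (hMbar : Mbar.PosDef) (hMbarDiag : Mbar.IsDiag)
    (C₁ : ℝ) (hC₁ : C₁ ∈ Set.Ioo (0 : ℝ) 1)
    (hlow : ∀ u : Fin n → ℝ, C₁ * (Mbar.mulVec u ⬝ᵥ u) ≤ M.mulVec u ⬝ᵥ u)
    (hup : ∀ u : Fin n → ℝ, M.mulVec u ⬝ᵥ u ≤ Mbar.mulVec u ⬝ᵥ u)
    (τ : ℝ) (hτ : 0 < τ)
    (X : Matrix (Fin n) (Fin n) ℝ)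
    (hX : X = (1 + τ ^ 2 • (Mbar⁻¹ * A * M⁻¹ * A))⁻¹ * (Mbar⁻¹ * M - 1)) :
    ∀ z ∈ spectrum ℂ (X.map ((↑) : ℝ → ℂ)),
      z.im = 0 ∧ C₁ - 1 < z.re ∧ z.re ≤ 0 := by
  obtain ⟨hC0, hC1⟩ := hC₁
  intro z hz
  -- symmetry facts
  have hMs : M.IsSymm := by
    rw [Matrix.IsSymm, ← conjTranspose_eq_transpose_of_trivial]; exact hM.isHermitian
  have hMbars : Mbar.IsSymm := by
    rw [Matrix.IsSymm, ← conjTranspose_eq_transpose_of_trivial]; exact hMbar.isHermitian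
  have hAs : A.IsSymm := by
    rw [Matrix.IsSymm, ← conjTranspose_eq_transpose_of_trivial]; exact hA.isHermitian
  have hMinv : (M⁻¹).PosDef := hM.inv
  have hMinvs : (M⁻¹).IsSymm := by
    rw [Matrix.IsSymm, ← conjTranspose_eq_transpose_of_trivial]; exact hMinv.isHermitian
  set T : Matrix (Fin n) (Fin n) ℝ := A * M⁻¹ * A with hT
  have hTs : T.IsSymm := by
    rw [Matrix.IsSymm, hT, transpose_mul, transpose_mul, hAs.eq, hMinvs.eq, mul_assoc]
  set S : Matrix (Fin n) (Fin n) ℝ := Mbar + τ ^ 2 • T with hS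
  have hSs : S.IsSymm := by
    rw [Matrix.IsSymm, hS, transpose_add, transpose_smul, hMbars.eq, hTs.eq]
  set N : Matrix (Fin n) (Fin n) ℝ := M - Mbar with hN
  have hNs : N.IsSymm := by
    rw [Matrix.IsSymm, hN, transpose_sub, hMs.eq, hMbars.eq]
  -- quadratic form for T
  have hsymdot : ∀ x u : Fin n → ℝ, x ⬝ᵥ (A *ᵥ u) = (A *ᵥ x) ⬝ᵥ u := by
    intro x u
    conv_lhs => rw [dotProduct_mulVec, ← mulVec_transpose, hAs.eq]
  have hTquad : ∀ u : Fin n → ℝ, T *ᵥ u ⬝ᵥ u = (A *ᵥ u) ⬝ᵥ (M⁻¹ *ᵥ (A *ᵥ u)) := by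
    intro u
    rw [hT, ← mulVec_mulVec, ← mulVec_mulVec, ← hsymdot, dotProduct_comm]
  have hTpos : ∀ u : Fin n → ℝ, u ≠ 0 → 0 < T *ᵥ u ⬝ᵥ u := by
    intro u hu
    have hy : A *ᵥ u ≠ 0 := by
      intro h0
      have := hA.dotProduct_mulVec_pos hu
      rw [star_trivial, h0, dotProduct_zero] at this
      exact lt_irrefl _ this
    have := hMinv.dotProduct_mulVec_pos hy
    rw [star_trivial] at this
    rw [hTquad]
    exact this
  have hTnonneg : ∀ u : Fin n → ℝ, 0 ≤ T *ᵥ u ⬝ᵥ u := by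
    intro u
    have := hMinv.posSemidef.dotProduct_mulVec_nonneg (A *ᵥ u)
    rw [star_trivial] at this
    rw [hTquad]
    exact this
  -- invertibility facts
  have hMbarUnit : IsUnit Mbar.det := isUnit_iff_ne_zero.mpr (ne_of_gt hMbar.det_pos)
  have hMUnit : IsUnit M.det := isUnit_iff_ne_zero.mpr (ne_of_gt hM.det_pos)
  have hSpd : S.PosDef := by
    rw [posDef_iff_dotProduct_mulVec]
    constructor
    · rw [Matrix.IsHermitian, conjTranspose_eq_transpose_of_trivial]; exact hSs.eq
    · intro u hu
      rw [star_trivial, hS, add_mulVec, dotProduct_add]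
      have h1 := hMbar.dotProduct_mulVec_pos hu
      rw [star_trivial] at h1
      have h2 : 0 < u ⬝ᵥ (τ ^ 2 • T) *ᵥ u := by
        rw [smul_mulVec, dotProduct_smul, smul_eq_mul, dotProduct_comm]
        exact mul_pos (pow_pos hτ 2) (hTpos u hu)
      linarith
  have hSUnit : IsUnit S.det := isUnit_iff_ne_zero.mpr (ne_of_gt hSpd.det_pos)
  set P : Matrix (Fin n) (Fin n) ℝ := 1 + τ ^ 2 • (Mbar⁻¹ * A * M⁻¹ * A) with hP
  have hMbarP : Mbar * P = S := by
    rw [hP, hS, mul_add, mul_one, hT, Matrix.mul_smul]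
    congr 1
    rw [show Mbar⁻¹ * A * M⁻¹ * A = Mbar⁻¹ * (A * M⁻¹ * A) by simp only [mul_assoc],
      ← mul_assoc, Matrix.mul_nonsing_inv Mbar hMbarUnit, one_mul]
  have hPUnit : IsUnit P.det := by
    have : Mbar.det * P.det = S.det := by rw [← det_mul, hMbarP]
    apply isUnit_iff_ne_zero.mpr
    intro h
    rw [h, mul_zero] at this
    exact (ne_of_gt hSpd.det_pos) this.symm
  have hSX : S * X = N := by
    rw [← hMbarP, hX, mul_assoc, ← mul_assoc P, Matrix.mul_nonsing_inv P hPUnit, one_mul,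
      hN, mul_sub, mul_one, ← mul_assoc, Matrix.mul_nonsing_inv Mbar hMbarUnit, one_mul]
  -- complexification
  have hSXc : S.map ((↑) : ℝ → ℂ) * X.map ((↑) : ℝ → ℂ) = N.map ((↑) : ℝ → ℂ) := by
    have : (S * X).map ((↑) : ℝ → ℂ) = N.map ((↑) : ℝ → ℂ) := by rw [hSX]
    rwa [show (S * X).map ((↑) : ℝ → ℂ) = S.map ((↑) : ℝ → ℂ) * X.map ((↑) : ℝ → ℂ) from
      Matrix.map_mul (f := Complex.ofRealHom)] at this
  -- eigenvector
  rw [spectrum.mem_iff] at hz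
  have hdet : (algebraMap ℂ (Matrix (Fin n) (Fin n) ℂ) z - X.map ((↑) : ℝ → ℂ)).det = 0 := by
    by_contra h
    exact hz ((Matrix.isUnit_iff_isUnit_det _).mpr (isUnit_iff_ne_zero.mpr h))
  obtain ⟨v, hv0, hveq⟩ := (Matrix.exists_mulVec_eq_zero_iff).mpr hdet
  have heig : (X.map ((↑) : ℝ → ℂ)) *ᵥ v = z • v := by
    have h1 : (algebraMap ℂ (Matrix (Fin n) (Fin n) ℂ) z) = z • 1 :=
      Algebra.algebraMap_eq_smul_one z
    rw [h1, sub_mulVec, smul_mulVec, one_mulVec, sub_eq_zero] at hveq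
    exact hveq.symm
  have hkey : (N.map ((↑) : ℝ → ℂ)) *ᵥ v = z • ((S.map ((↑) : ℝ → ℂ)) *ᵥ v) := by
    rw [← hSXc, ← mulVec_mulVec, heig, mulVec_smul]
  -- quadratic forms
  set a : Fin n → ℝ := fun i => (v i).re with haa
  set b : Fin n → ℝ := fun i => (v i).im with hbb
  have hform : ((N *ᵥ a ⬝ᵥ a + N *ᵥ b ⬝ᵥ b : ℝ) : ℂ)
      = z * ((S *ᵥ a ⬝ᵥ a + S *ᵥ b ⬝ᵥ b : ℝ) : ℂ) := by
    rw [← quadC N hNs v, ← quadC S hSs v, hkey, dotProduct_smul, smul_eq_mul]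
  have hab : a ≠ 0 ∨ b ≠ 0 := by
    by_contra h
    push_neg at h
    apply hv0
    funext i
    have h1 : a i = 0 := by rw [h.1]; rfl
    have h2 : b i = 0 := by rw [h.2]; rfl
    exact Complex.ext h1 h2
  -- real number facts
  set ma := M *ᵥ a ⬝ᵥ a; set mb := M *ᵥ b ⬝ᵥ b
  set ba := Mbar *ᵥ a ⬝ᵥ a; set bb := Mbar *ᵥ b ⬝ᵥ b
  set ta := T *ᵥ a ⬝ᵥ a; set tb := T *ᵥ b ⬝ᵥ b
  have hNa : ∀ u : Fin n → ℝ, N *ᵥ u ⬝ᵥ u = M *ᵥ u ⬝ᵥ u - Mbar *ᵥ u ⬝ᵥ u := by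
    intro u; rw [hN, sub_mulVec, sub_dotProduct]
  have hSa : ∀ u : Fin n → ℝ, S *ᵥ u ⬝ᵥ u = Mbar *ᵥ u ⬝ᵥ u + τ ^ 2 * (T *ᵥ u ⬝ᵥ u) := by
    intro u; rw [hS, add_mulVec, add_dotProduct, smul_mulVec, smul_dotProduct, smul_eq_mul]
  have htpos : 0 < ta + tb := by
    rcases hab with h | h
    · have := hTpos a h; have := hTnonneg b; linarith
    · have := hTpos b h; have := hTnonneg a; linarith
  have hbnn : 0 ≤ ba + bb := by
    have h1 := hMbar.posSemidef.dotProduct_mulVec_nonneg a; rw [star_trivial, dotProduct_comm] at h1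
    have h2 := hMbar.posSemidef.dotProduct_mulVec_nonneg b; rw [star_trivial, dotProduct_comm] at h2
    linarith
  set dS : ℝ := S *ᵥ a ⬝ᵥ a + S *ᵥ b ⬝ᵥ b with hdS
  set nN : ℝ := N *ᵥ a ⬝ᵥ a + N *ᵥ b ⬝ᵥ b with hnN
  have hdSeq : dS = (ba + bb) + τ ^ 2 * (ta + tb) := by rw [hdS, hSa, hSa]; ring
  have hnNeq : nN = (ma + mb) - (ba + bb) := by rw [hnN, hNa, hNa]; ring
  have hdSpos : 0 < dS := by
    rw [hdSeq]
    have := mul_pos (pow_pos hτ 2) htpos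
    linarith
  have hup' : ma + mb ≤ ba + bb := by
    have h1 := hup a; have h2 := hup b; unfold ma mb ba bb; linarith
  have hlow' : C₁ * (ba + bb) ≤ ma + mb := by
    have h1 := hlow a; have h2 := hlow b; unfold ma mb ba bb; linarith
  -- z is real
  have hdne : (dS : ℂ) ≠ 0 := Complex.ofReal_ne_zero.mpr (ne_of_gt hdSpos)
  have hz_eq : z = ((nN / dS : ℝ) : ℂ) := by
    rw [Complex.ofReal_div, hform, mul_div_assoc, div_self hdne, mul_one]
  have him : z.im = 0 := by rw [hz_eq]; exact Complex.ofReal_im _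
  have hre : z.re = nN / dS := by rw [hz_eq]; exact congrArg Complex.re rfl ▸ Complex.ofReal_re _
  refine ⟨him, ?_, ?_⟩
  · rw [hre]
    rw [lt_div_iff₀ hdSpos]
    have key : (C₁ - 1) * dS < nN := by
      have h1 : (C₁ - 1) * dS = (C₁ - 1) * (ba + bb) + (C₁ - 1) * (τ ^ 2 * (ta + tb)) := by
        rw [hdSeq]; ring
      have h2 : (C₁ - 1) * (τ ^ 2 * (ta + tb)) < 0 := by
        apply mul_neg_of_neg_of_pos (by linarith)
        exact mul_pos (pow_pos hτ 2) htpos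
      have h3 : (C₁ - 1) * (ba + bb) ≤ nN := by
        rw [hnNeq]
        nlinarith
      linarith
    linarith
  · rw [hre]
    apply div_nonpos_of_nonpos_of_nonneg _ (le_of_lt hdSpos)
    rw [hnNeq]; linarith
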